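/- Let x^N = (x^{N,1},…,x^{N,N}) and ξ^N = (ξ^{N,1},…,ξ^{N,N}) be trajectories in ℝ^d, with empirical measure μ_t^N = (1/N)Σ_i δ_{x_t^{N,i}}, and suppose ξ^N solves the particle adjoint system dξ_t^i/dt = (1/N)Σ_j ∇K₁(x_t^i − x_t^j) ξ_t^i − (1/N)Σ_j ∇K₁(x_t^j − x_t^i) ξ_t^j + Σ_ℓ ∇K₂(x_t^i − u_t^ℓ) ξ_t^i + Σ_l ∂_l j(⟨g₁,μ_t^N⟩,…,⟨g_L,μ_t^N⟩) ∇g_l(x_t^i), with ξ_T^i = 0, where K₁, K₂ ∈ C_b²(ℝ^d), j ∈ C¹(ℝ^L), g_l ∈ C¹(ℝ^d) with linearly growing gradients. Then there is a constant C_ξ, independent of N, depending only on bounds on DK₁, DK₂, Dj and Dg_l and T, such that sup_{t∈[0,T]} (1/N) Σ_{i=1}^N |ξ_t^{N,i}|² ≤ C_ξ. -/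

import Mathlib

open MeasureTheory Finset

set_option maxHeartbeats 1000000

section Aux
variable {ι : Type*} [Fintype ι] {E : Type*} [NormedAddCommGroup E]

lemma l2_norm_le_of_forall (a : PiLp 2 (fun _ : ι => E)) {b : ι → ℝ}
    (h : ∀ i, ‖a i‖ ≤ b i) : ‖a‖ ≤ Real.sqrt (∑ i, b i ^ 2) := by
  rw [PiLp.norm_eq_of_L2]
  apply Real.sqrt_le_sqrt
  exact Finset.sum_le_sum fun i _ => pow_le_pow_left₀ (norm_nonneg _) (h i) 2

lemma l2_norm_le_mul (a w : PiLp 2 (fun _ : ι => E)) {c : ℝ} (hc : 0 ≤ c)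
    (h : ∀ i, ‖a i‖ ≤ c * ‖w i‖) : ‖a‖ ≤ c * ‖w‖ := by
  refine (l2_norm_le_of_forall a h).trans_eq ?_
  rw [PiLp.norm_eq_of_L2]
  have : ∀ i : ι, (c * ‖w i‖) ^ 2 = c ^ 2 * ‖w i‖ ^ 2 := fun i => by ring
  simp_rw [this, ← Finset.mul_sum]
  rw [Real.sqrt_mul (sq_nonneg c), Real.sqrt_sq hc]

lemma l2_norm_le_card (a : PiLp 2 (fun _ : ι => E)) {c : ℝ} (hc : 0 ≤ c)
    (h : ∀ i, ‖a i‖ ≤ c) : ‖a‖ ≤ Real.sqrt (Fintype.card ι) * c := by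
  refine (l2_norm_le_of_forall a h).trans_eq ?_
  rw [Finset.sum_const, card_univ, nsmul_eq_mul, Real.sqrt_mul (by positivity),
    Real.sqrt_sq hc]

lemma l2_coord_le (v : PiLp 2 (fun _ : ι => E)) (i : ι) : ‖v i‖ ≤ ‖v‖ := by
  have h : ‖v i‖ ^ 2 ≤ ∑ j, ‖v j‖ ^ 2 :=
    Finset.single_le_sum (f := fun j => ‖v j‖ ^ 2) (fun j _ => sq_nonneg _) (Finset.mem_univ i)
  rw [← PiLp.norm_sq_eq_of_L2] at h
  have := Real.sqrt_le_sqrt h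
  rwa [Real.sqrt_sq (norm_nonneg _), Real.sqrt_sq (norm_nonneg _)] at this

lemma sum_norm_le_sqrt_card (w : PiLp 2 (fun _ : ι => E)) :
    ∑ i, ‖w i‖ ≤ Real.sqrt (Fintype.card ι) * ‖w‖ := by
  have h : (∑ i, ‖w i‖) ^ 2 ≤ (Fintype.card ι : ℝ) * ∑ i, ‖w i‖ ^ 2 := by
    have := sq_sum_le_card_mul_sum_sq (s := (univ : Finset ι)) (f := fun i => ‖w i‖)
    simpa [card_univ] using this
  rw [← PiLp.norm_sq_eq_of_L2] at h
  have h2 := Real.sqrt_le_sqrt h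
  rwa [Real.sqrt_sq (Finset.sum_nonneg fun i _ => norm_nonneg _),
    Real.sqrt_mul (by positivity), Real.sqrt_sq (norm_nonneg _)] at h2

end Aux

/-- uniform-in-`N` bound for the particle adjoint variables:
there is a constant `C_ξ`, independent of `N` (depending only on the data
bounds, `T` and the initial radius `R`), such that
`sup_t (1/N) Σ_i |ξ_t^{N,i}|² ≤ C_ξ`. -/
theorem stmt_19 {d M L : ℕ} (T R CK Cj Cg : ℝ) (hT : 0 < T)
    (K₁ K₂ : EuclideanSpace ℝ (Fin d) → EuclideanSpace ℝ (Fin d))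
    (hK₁ : ContDiff ℝ 2 K₁) (hK₂ : ContDiff ℝ 2 K₂)
    (hK₁b : ∀ x, ‖K₁ x‖ + ‖fderiv ℝ K₁ x‖ ≤ CK)
    (hK₂b : ∀ x, ‖K₂ x‖ + ‖fderiv ℝ K₂ x‖ ≤ CK)
    (jj : EuclideanSpace ℝ (Fin L) → ℝ) (hjj : ContDiff ℝ 1 jj)
    (hjjb : ∀ p, ‖gradient jj p‖ ≤ Cj)
    (g : Fin L → EuclideanSpace ℝ (Fin d) → ℝ)
    (hg : ∀ l, ContDiff ℝ 1 (g l))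
    (hgb : ∀ l x, ‖gradient (g l) x‖ ≤ Cg * (1 + ‖x‖)) :
    ∃ Cξ : ℝ, ∀ (N : ℕ), 0 < N →
      ∀ (x ξ : ℝ → Fin N → EuclideanSpace ℝ (Fin d))
        (u : ℝ → Fin M → EuclideanSpace ℝ (Fin d)),
      (∀ i, ‖x 0 i‖ ≤ R) →
      -- the interacting particle system
      (∀ t ∈ Set.Icc (0 : ℝ) T, ∀ i, HasDerivAt (fun s => x s i)
        (-(N : ℝ)⁻¹ • (∑ k : Fin N, K₁ (x t i - x t k))
          - ∑ ℓ : Fin M, K₂ (x t i - u t ℓ)) t) →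
      -- the particle adjoint system
      (∀ t ∈ Set.Icc (0 : ℝ) T, ∀ i, HasDerivAt (fun s => ξ s i)
        ((N : ℝ)⁻¹ • (∑ k : Fin N, (fderiv ℝ K₁ (x t i - x t k)) (ξ t i))
          - (N : ℝ)⁻¹ • (∑ k : Fin N, (fderiv ℝ K₁ (x t k - x t i)) (ξ t k))
          + (∑ ℓ : Fin M, (fderiv ℝ K₂ (x t i - u t ℓ)) (ξ t i))
          + ∑ l : Fin L,
              (gradient jj (WithLp.toLp 2 (fun l' => (N : ℝ)⁻¹ * ∑ k : Fin N, g l' (x t k))) l)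
                • gradient (g l) (x t i)) t) →
      -- terminal condition
      (∀ i, ξ T i = 0) →
      ∀ t ∈ Set.Icc (0 : ℝ) T, (N : ℝ)⁻¹ * ∑ i : Fin N, ‖ξ t i‖ ^ 2 ≤ Cξ := by
  classical
  set Rx : ℝ := R + CK * (1 + M) * T with hRxdef
  set ε : ℝ := L * (Cj * (Cg * (1 + Rx))) with hεdef
  set K : ℝ := CK * (2 + M) + 1 with hKdef
  refine ⟨(ε / K * Real.exp (K * T)) ^ 2, ?_⟩
  intro N hN x ξ u hx0 hxde hξde hξT
  -- basic nonnegativity facts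
  have hCK : 0 ≤ CK := le_trans (by positivity) (hK₁b 0)
  have hCj : 0 ≤ Cj := le_trans (norm_nonneg _) (hjjb 0)
  have hR : 0 ≤ R := le_trans (norm_nonneg _) (hx0 ⟨0, hN⟩)
  have hKpos : 0 < K := by rw [hKdef]; positivity
  have hRx0 : 0 ≤ Rx := by rw [hRxdef]; positivity
  have hCg' : Fin L → 0 ≤ Cg := fun l => by
    have := le_trans (norm_nonneg _) (hgb l 0)
    simpa using this
  have hεnn : 0 ≤ ε := by
    rcases Nat.eq_zero_or_pos L with hL | hL
    · simp [hεdef, hL]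
    · have hCg := hCg' ⟨0, hL⟩
      rw [hεdef]
      have h1 : (0:ℝ) ≤ 1 + Rx := by linarith
      positivity
  have hNR : (0:ℝ) < N := Nat.cast_pos.2 hN
  have hsN : (0:ℝ) < Real.sqrt N := Real.sqrt_pos.2 hNR
  -- operator norm bounds
  have hK₁d : ∀ y, ‖fderiv ℝ K₁ y‖ ≤ CK := fun y =>
    le_trans (le_add_of_nonneg_left (norm_nonneg _)) (hK₁b y)
  have hK₂d : ∀ y, ‖fderiv ℝ K₂ y‖ ≤ CK := fun y =>
    le_trans (le_add_of_nonneg_left (norm_nonneg _)) (hK₂b y)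
  have hK₁n : ∀ y, ‖K₁ y‖ ≤ CK := fun y =>
    le_trans (le_add_of_nonneg_right (norm_nonneg _)) (hK₁b y)
  have hK₂n : ∀ y, ‖K₂ y‖ ≤ CK := fun y =>
    le_trans (le_add_of_nonneg_right (norm_nonneg _)) (hK₂b y)
  have hop₁ : ∀ y v, ‖(fderiv ℝ K₁ y) v‖ ≤ CK * ‖v‖ := fun y v =>
    ((fderiv ℝ K₁ y).le_opNorm v).trans
      (mul_le_mul_of_nonneg_right (hK₁d y) (norm_nonneg v))
  have hop₂ : ∀ y v, ‖(fderiv ℝ K₂ y) v‖ ≤ CK * ‖v‖ := fun y v =>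
    ((fderiv ℝ K₂ y).le_opNorm v).trans
      (mul_le_mul_of_nonneg_right (hK₂d y) (norm_nonneg v))
  have hNinv : (0:ℝ) ≤ (N:ℝ)⁻¹ := by positivity
  -- uniform bound on the particle trajectories
  have hxb : ∀ t ∈ Set.Icc (0:ℝ) T, ∀ i, ‖x t i‖ ≤ Rx := by
    intro t ht i
    have hb : ∀ s ∈ Set.Icc (0:ℝ) T,
        ‖-(N : ℝ)⁻¹ • (∑ k : Fin N, K₁ (x s i - x s k))
          - ∑ ℓ : Fin M, K₂ (x s i - u s ℓ)‖ ≤ CK * (1 + M) := by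
      intro s hs
      have h1 : ‖(N : ℝ)⁻¹ • (∑ k : Fin N, K₁ (x s i - x s k))‖ ≤ CK := by
        rw [norm_smul, Real.norm_eq_abs, abs_of_nonneg hNinv]
        have h2 : ‖∑ k : Fin N, K₁ (x s i - x s k)‖ ≤ (N:ℝ) * CK := by
          refine (norm_sum_le _ _).trans ?_
          calc ∑ k : Fin N, ‖K₁ (x s i - x s k)‖ ≤ ∑ _k : Fin N, CK :=
                Finset.sum_le_sum fun k _ => hK₁n _
            _ = (N:ℝ) * CK := by
                rw [Finset.sum_const, card_univ, Fintype.card_fin, nsmul_eq_mul]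
        calc (N:ℝ)⁻¹ * ‖∑ k : Fin N, K₁ (x s i - x s k)‖
            ≤ (N:ℝ)⁻¹ * ((N:ℝ) * CK) := by gcongr
          _ = CK := by field_simp
      have h3 : ‖∑ ℓ : Fin M, K₂ (x s i - u s ℓ)‖ ≤ (M:ℝ) * CK := by
        refine (norm_sum_le _ _).trans ?_
        calc ∑ ℓ : Fin M, ‖K₂ (x s i - u s ℓ)‖ ≤ ∑ _ℓ : Fin M, CK :=
              Finset.sum_le_sum fun ℓ _ => hK₂n _
          _ = (M:ℝ) * CK := by
              rw [Finset.sum_const, card_univ, Fintype.card_fin, nsmul_eq_mul]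
      calc ‖-(N : ℝ)⁻¹ • (∑ k : Fin N, K₁ (x s i - x s k))
            - ∑ ℓ : Fin M, K₂ (x s i - u s ℓ)‖
          ≤ ‖-(N : ℝ)⁻¹ • (∑ k : Fin N, K₁ (x s i - x s k))‖
            + ‖∑ ℓ : Fin M, K₂ (x s i - u s ℓ)‖ := norm_sub_le _ _
        _ ≤ CK + (M:ℝ) * CK := by
            refine add_le_add ?_ h3
            rw [neg_smul, norm_neg]; exact h1
        _ = CK * (1 + M) := by ring
    have hmvt := (convex_Icc (0:ℝ) T).norm_image_sub_le_of_norm_hasDerivWithin_le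
      (f := fun s => x s i)
      (fun s hs => (hxde s hs i).hasDerivWithinAt) hb
      (Set.left_mem_Icc.2 hT.le) ht
    -- hmvt : ‖x t i - x 0 i‖ ≤ CK * (1 + M) * ‖t - 0‖
    have h5 : ‖x t i‖ ≤ ‖x 0 i‖ + ‖x t i - x 0 i‖ := by
      have heq : x 0 i + (x t i - x 0 i) = x t i := by abel
      calc ‖x t i‖ = ‖x 0 i + (x t i - x 0 i)‖ := by rw [heq]
        _ ≤ ‖x 0 i‖ + ‖x t i - x 0 i‖ := norm_add_le _ _
    have h6 : ‖t - (0:ℝ)‖ ≤ T := by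
      rw [sub_zero, Real.norm_eq_abs, abs_of_nonneg ht.1]; exact ht.2
    have h7 : CK * (1 + M) * ‖t - (0:ℝ)‖ ≤ CK * (1 + M) * T := by
      have : (0:ℝ) ≤ CK * (1 + M) := by positivity
      exact mul_le_mul_of_nonneg_left h6 this
    rw [hRxdef]
    linarith [hx0 i, hmvt]
  -- the rescaled, time-reversed adjoint vector
  set c : ℝ := (Real.sqrt N)⁻¹ with hcdef
  have hc0 : 0 ≤ c := by positivity
  let Ξ : ℝ → PiLp 2 (fun _ : Fin N => EuclideanSpace ℝ (Fin d)) := fun t => WithLp.toLp 2 (ξ t)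
  let V : ℝ → Fin N → EuclideanSpace ℝ (Fin d) := fun t i =>
    (N : ℝ)⁻¹ • (∑ k : Fin N, (fderiv ℝ K₁ (x t i - x t k)) (ξ t i))
      - (N : ℝ)⁻¹ • (∑ k : Fin N, (fderiv ℝ K₁ (x t k - x t i)) (ξ t k))
      + (∑ ℓ : Fin M, (fderiv ℝ K₂ (x t i - u t ℓ)) (ξ t i))
      + ∑ l : Fin L,
          (gradient jj (WithLp.toLp 2 (fun l' => (N : ℝ)⁻¹ * ∑ k : Fin N, g l' (x t k))) l)
            • gradient (g l) (x t i)
  let Vv : ℝ → PiLp 2 (fun _ : Fin N => EuclideanSpace ℝ (Fin d)) := fun t => WithLp.toLp 2 (V t)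
  let Φ : ℝ → PiLp 2 (fun _ : Fin N => EuclideanSpace ℝ (Fin d)) := fun s => c • Ξ (T - s)
  let W : ℝ → PiLp 2 (fun _ : Fin N => EuclideanSpace ℝ (Fin d)) :=
    fun s => c • ((-1 : ℝ) • Vv (T - s))
  have hCS : ContinuousSMul ℝ (PiLp 2 (fun _ : Fin N => EuclideanSpace ℝ (Fin d))) :=
    IsBoundedSMul.continuousSMul
  have hΦd : ∀ s ∈ Set.Icc (0:ℝ) T, HasDerivAt Φ (W s) s := by
    intro s hs
    have ht : T - s ∈ Set.Icc (0:ℝ) T := ⟨by linarith [hs.2], by linarith [hs.1]⟩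
    have hcomp : ∀ i, HasDerivAt (fun r => ξ (T - r) i) ((-1:ℝ) • V (T - s) i) s := by
      intro i
      have h1 : HasDerivAt (fun r => ξ r i) (V (T - s) i) (T - s) := hξde _ ht i
      have h2 : HasDerivAt (fun r : ℝ => T - r) (-1) s := by
        simpa using (hasDerivAt_id s).const_sub T
      exact h1.scomp s h2
    have h4 : HasDerivAt (F := PiLp 2 (fun _ : Fin N => EuclideanSpace ℝ (Fin d)))
        (fun r => WithLp.toLp 2 (ξ (T - r))) ((-1:ℝ) • Vv (T - s)) s := by
      have h5 : HasDerivAt (fun r => fun i => ξ (T - r) i)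
          (fun i => (-1:ℝ) • V (T - s) i) s := hasDerivAt_pi.2 hcomp
      exact ((PiLp.continuousLinearEquiv 2 ℝ
        (fun _ : Fin N => EuclideanSpace ℝ (Fin d))).symm.toContinuousLinearMap.hasFDerivAt).comp_hasDerivAt s h5
    exact h4.const_smul c
  -- norm identities
  have hΞsq : ∀ t, ‖Ξ t‖ ^ 2 = ∑ i, ‖ξ t i‖ ^ 2 := fun t =>
    PiLp.norm_sq_eq_of_L2 _ (Ξ t)
  have hΦn : ∀ s, ‖Φ s‖ = c * ‖Ξ (T - s)‖ := fun s => by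
    show ‖c • Ξ (T - s)‖ = _
    rw [norm_smul, Real.norm_eq_abs, abs_of_nonneg hc0]
  have hWn : ∀ s, ‖W s‖ = c * ‖Vv (T - s)‖ := fun s => by
    show ‖c • ((-1:ℝ) • Vv (T - s))‖ = _
    rw [norm_smul, norm_smul]
    simp [abs_of_nonneg hc0]
  -- the key estimate on the right-hand side
  have hVb : ∀ t ∈ Set.Icc (0:ℝ) T,
      ‖Vv t‖ ≤ (CK * (2 + M)) * ‖Ξ t‖ + Real.sqrt N * ε := by
    intro t ht
    let Av : PiLp 2 (fun _ : Fin N => EuclideanSpace ℝ (Fin d)) := WithLp.toLp 2 fun i =>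
      (N : ℝ)⁻¹ • (∑ k : Fin N, (fderiv ℝ K₁ (x t i - x t k)) (ξ t i))
    let Bv : PiLp 2 (fun _ : Fin N => EuclideanSpace ℝ (Fin d)) := WithLp.toLp 2 fun i =>
      (N : ℝ)⁻¹ • (∑ k : Fin N, (fderiv ℝ K₁ (x t k - x t i)) (ξ t k))
    let Cv : PiLp 2 (fun _ : Fin N => EuclideanSpace ℝ (Fin d)) := WithLp.toLp 2 fun i =>
      ∑ ℓ : Fin M, (fderiv ℝ K₂ (x t i - u t ℓ)) (ξ t i)
    let Dv : PiLp 2 (fun _ : Fin N => EuclideanSpace ℝ (Fin d)) := WithLp.toLp 2 fun i =>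
      ∑ l : Fin L,
        (gradient jj (WithLp.toLp 2 (fun l' => (N : ℝ)⁻¹ * ∑ k : Fin N, g l' (x t k))) l)
          • gradient (g l) (x t i)
    have hsplit : Vv t = Av - Bv + Cv + Dv := rfl
    have hAv : ‖Av‖ ≤ CK * ‖Ξ t‖ := by
      refine l2_norm_le_mul Av (Ξ t) hCK fun i => ?_
      show ‖(N : ℝ)⁻¹ • (∑ k : Fin N, (fderiv ℝ K₁ (x t i - x t k)) (ξ t i))‖
        ≤ CK * ‖ξ t i‖
      rw [norm_smul, Real.norm_eq_abs, abs_of_nonneg hNinv]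
      have h2 : ‖∑ k : Fin N, (fderiv ℝ K₁ (x t i - x t k)) (ξ t i)‖
          ≤ (N:ℝ) * (CK * ‖ξ t i‖) := by
        refine (norm_sum_le _ _).trans ?_
        calc ∑ k : Fin N, ‖(fderiv ℝ K₁ (x t i - x t k)) (ξ t i)‖
            ≤ ∑ _k : Fin N, CK * ‖ξ t i‖ := Finset.sum_le_sum fun k _ => hop₁ _ _
          _ = (N:ℝ) * (CK * ‖ξ t i‖) := by
              rw [Finset.sum_const, card_univ, Fintype.card_fin, nsmul_eq_mul]
      calc (N:ℝ)⁻¹ * ‖∑ k : Fin N, (fderiv ℝ K₁ (x t i - x t k)) (ξ t i)‖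
          ≤ (N:ℝ)⁻¹ * ((N:ℝ) * (CK * ‖ξ t i‖)) := by gcongr
        _ = CK * ‖ξ t i‖ := by field_simp
    have hBv : ‖Bv‖ ≤ CK * ‖Ξ t‖ := by
      have hBc : ∀ i, ‖Bv i‖ ≤ CK * ((N:ℝ)⁻¹ * ∑ k, ‖ξ t k‖) := by
        intro i
        show ‖(N : ℝ)⁻¹ • (∑ k : Fin N, (fderiv ℝ K₁ (x t k - x t i)) (ξ t k))‖ ≤ _
        rw [norm_smul, Real.norm_eq_abs, abs_of_nonneg hNinv]
        have h2 : ‖∑ k : Fin N, (fderiv ℝ K₁ (x t k - x t i)) (ξ t k)‖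
            ≤ ∑ k : Fin N, CK * ‖ξ t k‖ :=
          (norm_sum_le _ _).trans (Finset.sum_le_sum fun k _ => hop₁ _ _)
        calc (N:ℝ)⁻¹ * ‖∑ k : Fin N, (fderiv ℝ K₁ (x t k - x t i)) (ξ t k)‖
            ≤ (N:ℝ)⁻¹ * ∑ k : Fin N, CK * ‖ξ t k‖ := by gcongr
          _ = CK * ((N:ℝ)⁻¹ * ∑ k, ‖ξ t k‖) := by rw [← Finset.mul_sum]; ring
      have hcn : (0:ℝ) ≤ CK * ((N:ℝ)⁻¹ * ∑ k, ‖ξ t k‖) := by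
        have : (0:ℝ) ≤ ∑ k, ‖ξ t k‖ := Finset.sum_nonneg fun k _ => norm_nonneg _
        positivity
      have h1 := l2_norm_le_card Bv hcn hBc
      rw [Fintype.card_fin] at h1
      have hsum : ∑ k, ‖ξ t k‖ ≤ Real.sqrt N * ‖Ξ t‖ := by
        have := sum_norm_le_sqrt_card (Ξ t)
        rwa [Fintype.card_fin] at this
      calc ‖Bv‖ ≤ Real.sqrt N * (CK * ((N:ℝ)⁻¹ * ∑ k, ‖ξ t k‖)) := h1
        _ ≤ Real.sqrt N * (CK * ((N:ℝ)⁻¹ * (Real.sqrt N * ‖Ξ t‖))) := by gcongr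
        _ = CK * ((Real.sqrt N * Real.sqrt N) * (N:ℝ)⁻¹ * ‖Ξ t‖) := by ring
        _ = CK * ‖Ξ t‖ := by
            rw [Real.mul_self_sqrt (Nat.cast_nonneg N), mul_inv_cancel₀ hNR.ne', one_mul]
    have hCv : ‖Cv‖ ≤ (CK * M) * ‖Ξ t‖ := by
      refine l2_norm_le_mul Cv (Ξ t) (by positivity) fun i => ?_
      show ‖∑ ℓ : Fin M, (fderiv ℝ K₂ (x t i - u t ℓ)) (ξ t i)‖ ≤ CK * M * ‖ξ t i‖
      refine (norm_sum_le _ _).trans ?_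
      calc ∑ ℓ : Fin M, ‖(fderiv ℝ K₂ (x t i - u t ℓ)) (ξ t i)‖
          ≤ ∑ _ℓ : Fin M, CK * ‖ξ t i‖ := Finset.sum_le_sum fun ℓ _ => hop₂ _ _
        _ = CK * M * ‖ξ t i‖ := by
            rw [Finset.sum_const, card_univ, Fintype.card_fin, nsmul_eq_mul]; ring
    have hDv : ‖Dv‖ ≤ Real.sqrt N * ε := by
      have hDc : ∀ i, ‖Dv i‖ ≤ ε := by
        intro i
        show ‖∑ l : Fin L,
          (gradient jj (WithLp.toLp 2 (fun l' => (N : ℝ)⁻¹ * ∑ k : Fin N, g l' (x t k))) l)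
            • gradient (g l) (x t i)‖ ≤ ε
        refine (norm_sum_le _ _).trans ?_
        have hterm : ∀ l : Fin L,
            ‖(gradient jj (WithLp.toLp 2 (fun l' => (N : ℝ)⁻¹ * ∑ k : Fin N, g l' (x t k))) l)
              • gradient (g l) (x t i)‖ ≤ Cj * (Cg * (1 + Rx)) := by
          intro l
          rw [norm_smul, Real.norm_eq_abs]
          have ha : |gradient jj (WithLp.toLp 2 (fun l' => (N : ℝ)⁻¹ * ∑ k : Fin N, g l' (x t k))) l| ≤ Cj := by
            have h1 := l2_coord_le (E := ℝ)
              (gradient jj (WithLp.toLp 2 (fun l' => (N : ℝ)⁻¹ * ∑ k : Fin N, g l' (x t k)))) l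
            have h2 := hjjb (WithLp.toLp 2 (fun l' => (N : ℝ)⁻¹ * ∑ k : Fin N, g l' (x t k)))
            calc |gradient jj (WithLp.toLp 2 (fun l' => (N : ℝ)⁻¹ * ∑ k : Fin N, g l' (x t k))) l|
                = ‖gradient jj (WithLp.toLp 2 (fun l' => (N : ℝ)⁻¹ * ∑ k : Fin N, g l' (x t k))) l‖ :=
                  (Real.norm_eq_abs _).symm
              _ ≤ ‖gradient jj (WithLp.toLp 2 (fun l' => (N : ℝ)⁻¹ * ∑ k : Fin N, g l' (x t k)))‖ := h1
              _ ≤ Cj := h2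
          have hv : ‖gradient (g l) (x t i)‖ ≤ Cg * (1 + Rx) := by
            refine (hgb l _).trans ?_
            have := hxb t ht i
            exact mul_le_mul_of_nonneg_left (by linarith) (hCg' l)
          exact mul_le_mul ha hv (norm_nonneg _) hCj
        calc ∑ l : Fin L, ‖(gradient jj (WithLp.toLp 2 (fun l' => (N : ℝ)⁻¹ * ∑ k : Fin N, g l' (x t k))) l)
              • gradient (g l) (x t i)‖
            ≤ ∑ _l : Fin L, Cj * (Cg * (1 + Rx)) := Finset.sum_le_sum fun l _ => hterm l
          _ = ε := by
              rw [Finset.sum_const, card_univ, Fintype.card_fin, nsmul_eq_mul, hεdef]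
      have := l2_norm_le_card Dv hεnn hDc
      rwa [Fintype.card_fin] at this
    calc ‖Vv t‖ = ‖Av - Bv + Cv + Dv‖ := by rw [hsplit]
      _ ≤ ‖Av - Bv + Cv‖ + ‖Dv‖ := norm_add_le _ _
      _ ≤ (‖Av - Bv‖ + ‖Cv‖) + ‖Dv‖ := by gcongr; exact norm_add_le _ _
      _ ≤ ((‖Av‖ + ‖Bv‖) + ‖Cv‖) + ‖Dv‖ := by gcongr; exact norm_sub_le _ _
      _ ≤ ((CK * ‖Ξ t‖ + CK * ‖Ξ t‖) + (CK * M) * ‖Ξ t‖) + Real.sqrt N * ε := by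
          exact add_le_add (add_le_add (add_le_add hAv hBv) hCv) hDv
      _ = (CK * (2 + M)) * ‖Ξ t‖ + Real.sqrt N * ε := by ring
  -- Gronwall
  have hcont : ContinuousOn Φ (Set.Icc 0 T) := fun s hs =>
    ((hΦd s hs).continuousAt).continuousWithinAt
  have hderiv : ∀ s ∈ Set.Ico (0:ℝ) T, HasDerivWithinAt Φ (W s) (Set.Ici s) s :=
    fun s hs => (hΦd s ⟨hs.1, hs.2.le⟩).hasDerivWithinAt
  have hcsN : c * Real.sqrt N = 1 := inv_mul_cancel₀ hsN.ne'
  have hb : ∀ s ∈ Set.Ico (0:ℝ) T, ‖W s‖ ≤ K * ‖Φ s‖ + ε := by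
    intro s hs
    have ht : T - s ∈ Set.Icc (0:ℝ) T := ⟨by linarith [hs.2], by linarith [hs.1]⟩
    rw [hWn s, hΦn s]
    have h1 := hVb (T - s) ht
    have h2 : c * ‖Vv (T - s)‖
        ≤ c * ((CK * (2 + M)) * ‖Ξ (T - s)‖ + Real.sqrt N * ε) :=
      mul_le_mul_of_nonneg_left h1 hc0
    have h3 : c * ((CK * (2 + M)) * ‖Ξ (T - s)‖ + Real.sqrt N * ε)
        = (CK * (2 + M)) * (c * ‖Ξ (T - s)‖) + (c * Real.sqrt N) * ε := by ring
    rw [h3, hcsN, one_mul] at h2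
    have h4 : (CK * (2 + M)) * (c * ‖Ξ (T - s)‖) ≤ K * (c * ‖Ξ (T - s)‖) := by
      have hnn : (0:ℝ) ≤ c * ‖Ξ (T - s)‖ := by positivity
      have : CK * (2 + M) ≤ K := by rw [hKdef]; linarith
      exact mul_le_mul_of_nonneg_right this hnn
    linarith
  have h0 : ‖Φ 0‖ ≤ 0 := by
    have hΞT : Ξ (T - 0) = 0 := by
      refine PiLp.ext fun i => ?_
      show ξ (T - 0) i = 0
      rw [sub_zero]; exact hξT i
    have : Φ 0 = 0 := by show c • Ξ (T - 0) = 0; rw [hΞT, smul_zero]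
    rw [this, norm_zero]
  have hgron := norm_le_gronwallBound_of_norm_deriv_right_le hcont hderiv h0 hb
  -- conclude
  intro t ht
  have hs : T - t ∈ Set.Icc (0:ℝ) T := ⟨by linarith [ht.2], by linarith [ht.1]⟩
  have h2 := hgron (T - t) hs
  rw [gronwallBound_of_K_ne_0 hKpos.ne'] at h2
  simp only [zero_mul, zero_add, sub_zero] at h2
  have h3 : ‖Φ (T - t)‖ ≤ ε / K * Real.exp (K * T) := by
    refine h2.trans ?_
    have he : Real.exp (K * (T - t)) - 1 ≤ Real.exp (K * T) := by
      have : K * (T - t) ≤ K * T :=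
        mul_le_mul_of_nonneg_left (by linarith [ht.1]) hKpos.le
      have := Real.exp_le_exp.2 this
      linarith
    exact mul_le_mul_of_nonneg_left he (div_nonneg hεnn hKpos.le)
  have h4 : (N:ℝ)⁻¹ * ∑ i, ‖ξ t i‖ ^ 2 = ‖Φ (T - t)‖ ^ 2 := by
    rw [hΦn, sub_sub_cancel, mul_pow, hΞsq t]
    congr 1
    rw [hcdef, inv_pow, Real.sq_sqrt (Nat.cast_nonneg N)]
  rw [h4]
  exact pow_le_pow_left₀ (norm_nonneg _) h3 2
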